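/- Let k ≥ 1, m, n be natural numbers with m ≥ 2k - 1 and n ≥ k. For Lebesgue-almost every matrix A ∈ ℝ^{m×n} the following holds: for all vectors x, z ∈ ℝ^n, each with at most k nonzero entries, having the SAME support, if |Ax| = |Az| entrywise then z = x or z = -x. That is, m ≥ 2k - 1 measurements suffice to rule out two essentially distinct sparse vectors with fully overlapping supports mapping to the same phaseless measurements. -/

import Mathlib

open MeasureTheory

/-- Key genericity lemma: for a.e. matrix, every square submatrix determined by
injective row/column selections has nonzero determinant. -/
private lemma submatrix_det_ne_zero_ae (n : ℕ) :
    ∀ (t m : ℕ) (g : Fin t → Fin m) (f : Fin t → Fin n),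
      Function.Injective g → Function.Injective f →
      ∀ᵐ A : Fin m → Fin n → ℝ, ((Matrix.of A).submatrix g f).det ≠ 0 := by
  intro t
  induction t with
  | zero =>
    intro m g f hg hf
    filter_upwards with A
    simp [Matrix.det_fin_zero]
  | succ t IH =>
    intro m g f hg hf
    cases m with
    | zero => exact (g (Fin.last t)).elim0
    | succ m' =>
      set r : Fin (m' + 1) := g (Fin.last t) with hr
      have hne : ∀ i : Fin t, g (Fin.castSucc i) ≠ r := by
        intro i h
        exact (Fin.castSucc_lt_last i).ne (hg h)
      choose g' hg' using fun i : Fin t => Fin.exists_succAbove_eq (hne i)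
      have hg'inj : Function.Injective g' := by
        intro a b h
        have h2 : g (Fin.castSucc a) = g (Fin.castSucc b) := by
          rw [← hg' a, ← hg' b, h]
        exact Fin.castSucc_injective _ (hg h2)
      have hf'inj : Function.Injective (f ∘ Fin.castSucc) :=
        hf.comp (Fin.castSucc_injective _)
      have hIH := IH m' g' (f ∘ Fin.castSucc) hg'inj hf'inj
      set e := MeasurableEquiv.piFinSuccAbove (fun _ : Fin (m' + 1) => (Fin n → ℝ)) r with he
      have hpres : MeasurePreserving e volume volume :=
        volume_preserving_piFinSuccAbove (fun _ : Fin (m' + 1) => (Fin n → ℝ)) r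
      set D : (Fin (m' + 1) → Fin n → ℝ) → ℝ :=
        fun A => ((Matrix.of A).submatrix g f).det with hD
      have hDcont : Continuous D := (continuous_id.matrix_submatrix g f).matrix_det
      rw [ae_iff]
      simp only [ne_eq, not_not]
      have hset : {A : Fin (m' + 1) → Fin n → ℝ | D A = 0}
          = e ⁻¹' {p | D (e.symm p) = 0} := by
        ext A
        simp [e.symm_apply_apply]
      have hmeas2 : MeasurableSet {p : (Fin n → ℝ) × (Fin m' → Fin n → ℝ) | D (e.symm p) = 0} :=
        (hDcont.measurable.comp e.symm.measurable) (measurableSet_singleton 0)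
      rw [hset, hpres.measure_preimage hmeas2.nullMeasurableSet]
      rw [show (volume : Measure ((Fin n → ℝ) × (Fin m' → Fin n → ℝ)))
            = Measure.prod volume volume from Measure.volume_eq_prod _ _]
      rw [← Measure.prod_swap, Measure.map_apply measurable_swap hmeas2,
        Measure.measure_prod_null (measurable_swap hmeas2)]
      filter_upwards [hIH] with w hw
      -- For each fixed `w` (the other rows) with nonzero minor, the slice over the
      -- row `r` lies in a proper subspace.
      set M : (Fin n → ℝ) → Matrix (Fin (t + 1)) (Fin (t + 1)) ℝ :=
        fun v => (Matrix.of (e.symm (v, w))).submatrix g f with hM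
      have hMl : ∀ (v : Fin n → ℝ) j, M v (Fin.last t) j = v (f j) := by
        intro v j
        show (e.symm (v, w)) (g (Fin.last t)) (f j) = v (f j)
        rw [← hr]
        simp [he, MeasurableEquiv.piFinSuccAbove, Fin.insertNthEquiv]
      have hMc : ∀ (v : Fin n → ℝ) (i : Fin t) j,
          M v (Fin.castSucc i) j = w (g' i) (f j) := by
        intro v i j
        show (e.symm (v, w)) (g (Fin.castSucc i)) (f j) = w (g' i) (f j)
        rw [← hg' i]
        simp [he, MeasurableEquiv.piFinSuccAbove, Fin.insertNthEquiv]
      have hupd : ∀ v : Fin n → ℝ,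
          M v = Matrix.updateRow (M 0) (Fin.last t) (v ∘ f) := by
        intro v
        ext i j
        rcases Fin.eq_castSucc_or_eq_last i with ⟨i', rfl⟩ | rfl
        · rw [Matrix.updateRow_ne (Fin.castSucc_lt_last i').ne, hMc, hMc]
        · rw [Matrix.updateRow_self, hMl]
          rfl
      set ℓ : (Fin n → ℝ) →ₗ[ℝ] ℝ :=
        { toFun := fun v => (M v).det
          map_add' := by
            intro a b
            show (M (a + b)).det = (M a).det + (M b).det
            rw [hupd (a + b), hupd a, hupd b,
              show (a + b) ∘ f = a ∘ f + b ∘ f from rfl, Matrix.det_updateRow_add]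
          map_smul' := by
            intro c a
            show (M (c • a)).det = c • (M a).det
            rw [hupd (c • a), hupd a,
              show (c • a) ∘ f = c • (a ∘ f) from rfl, Matrix.det_updateRow_smul]
            rfl } with hℓ
      have hℓapp : ∀ v, ℓ v = (M v).det := fun _ => rfl
      have hsubmatrix_eq : ∀ v : Fin n → ℝ,
          (M v).submatrix (Fin.last t).succAbove (Fin.last t).succAbove
            = (Matrix.of w).submatrix g' (f ∘ Fin.castSucc) := by
        intro v
        ext i j
        simp only [Matrix.submatrix_apply, Fin.succAbove_last_apply, Function.comp_apply,
          Matrix.of_apply]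
        exact hMc v i j.castSucc
      have hproper : LinearMap.ker ℓ ≠ ⊤ := by
        intro htop
        have h0 : ℓ (Pi.single (f (Fin.last t)) 1) = 0 := by
          rw [LinearMap.ker_eq_top] at htop
          rw [htop]
          rfl
        have h1 : ℓ (Pi.single (f (Fin.last t)) 1)
            = ((Matrix.of w).submatrix g' (f ∘ Fin.castSucc)).det := by
          rw [hℓapp, Matrix.det_succ_row (M (Pi.single (f (Fin.last t)) 1)) (Fin.last t)]
          rw [Finset.sum_eq_single (Fin.last t)]
          · rw [hMl, hsubmatrix_eq]
            have hsign : ((-1 : ℝ)) ^ ((Fin.last t : ℕ) + (Fin.last t : ℕ)) = 1 :=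
              Even.neg_one_pow ⟨(Fin.last t : ℕ), rfl⟩
            rw [hsign, Pi.single_eq_same, one_mul, one_mul]
          · intro j _ hj
            rw [hMl, Pi.single_apply, if_neg (fun h => hj (hf h))]
            ring
          · intro h
            exact absurd (Finset.mem_univ _) h
        rw [h0] at h1
        exact hw h1.symm
      refine measure_mono_null ?_ (Measure.addHaar_submodule volume (LinearMap.ker ℓ) hproper)
      intro v hv
      exact LinearMap.mem_ker.mpr (hv : (M v).det = 0)

/-- If every square submatrix (with injective selections) of `A` is invertible,
then no nonzero `k`-sparse vector can be annihilated by `k` rows of `A`. -/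
private lemma no_sparse_kernel {k m n : ℕ} {A : Fin m → Fin n → ℝ}
    (hA : ∀ (t : ℕ) (g : Fin t → Fin m) (f : Fin t → Fin n),
      Function.Injective g → Function.Injective f →
      ((Matrix.of A).submatrix g f).det ≠ 0)
    {u : Fin n → ℝ} (hu : u ≠ 0) (hcard : (Function.support u).ncard ≤ k)
    {S : Finset (Fin m)} (hSk : k ≤ S.card)
    (hS : ∀ i ∈ S, (Matrix.of A).mulVec u i = 0) : False := by
  classical
  have hfin : (Function.support u).Finite := Set.toFinite _
  set T := hfin.toFinset with hT
  have htk : T.card ≤ k := by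
    rwa [Set.ncard_eq_toFinset_card _ hfin] at hcard
  have htpos : 0 < T.card := by
    obtain ⟨i, hi⟩ : (Function.support u).Nonempty := Function.support_nonempty_iff.mpr hu
    exact Finset.card_pos.mpr ⟨i, hfin.mem_toFinset.mpr hi⟩
  obtain ⟨S', hS'sub, hS'card⟩ := Finset.exists_subset_card_eq (le_trans htk hSk)
  set eT : { x // x ∈ T } ≃ Fin T.card :=
    Fintype.equivFinOfCardEq (Fintype.card_coe T) with heT
  set eS : { x // x ∈ S' } ≃ Fin T.card :=
    Fintype.equivFinOfCardEq ((Fintype.card_coe S').trans hS'card) with heS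
  set f : Fin T.card → Fin n := fun j => (eT.symm j : Fin n) with hf
  set g : Fin T.card → Fin m := fun i => (eS.symm i : Fin m) with hg
  have hfinj : Function.Injective f :=
    fun a b h => eT.symm.injective (Subtype.ext h)
  have hginj : Function.Injective g :=
    fun a b h => eS.symm.injective (Subtype.ext h)
  have hdet := hA T.card g f hginj hfinj
  have hmv : ((Matrix.of A).submatrix g f).mulVec (u ∘ f) = 0 := by
    funext i
    have h0 : (Matrix.of A).mulVec u (g i) = 0 := hS _ (hS'sub (eS.symm i).2)
    show ∑ j, A (g i) (f j) * u (f j) = 0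
    have e1 : ∑ j, A (g i) (f j) * u (f j)
        = ∑ x : { x // x ∈ T }, A (g i) (x : Fin n) * u (x : Fin n) :=
      Equiv.sum_comp eT.symm (fun x : { x // x ∈ T } => A (g i) (x : Fin n) * u (x : Fin n))
    have e2 : ∑ x : { x // x ∈ T }, A (g i) (x : Fin n) * u (x : Fin n)
        = ∑ j' ∈ T, A (g i) j' * u j' :=
      Finset.sum_coe_sort T (fun j' => A (g i) j' * u j')
    have e3 : ∑ j' ∈ T, A (g i) j' * u j' = ∑ j' : Fin n, A (g i) j' * u j' := by
      refine Finset.sum_subset (Finset.subset_univ T) ?_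
      intro x _ hx
      have : u x = 0 := by
        by_contra hux
        exact hx (by simp [hT, Function.mem_support, hux])
      rw [this, mul_zero]
    rw [e1, e2, e3]
    exact h0
  have huf : u ∘ f = 0 := Matrix.eq_zero_of_mulVec_eq_zero hdet hmv
  have hmem := (eT.symm ⟨0, htpos⟩).2
  exact (hfin.mem_toFinset.mp hmem) (congrFun huf ⟨0, htpos⟩)

/-- For `k ≥ 1`, `m ≥ 2k - 1` and `n ≥ k`, for Lebesgue-almost every real `m × n`
matrix `A`: two `k`-sparse vectors with the SAME support and the same phaseless
measurements `|Ax| = |Az|` agree up to global sign. -/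
theorem full_support_overlap_sparse_phase_retrieval_ae (k m n : ℕ) (hk : 1 ≤ k)
    (hm : 2 * k - 1 ≤ m) (hn : k ≤ n) :
    ∀ᵐ A : Fin m → Fin n → ℝ, ∀ x z : Fin n → ℝ,
      (Function.support x).ncard ≤ k →
      (Function.support z).ncard ≤ k →
      Function.support x = Function.support z →
      (∀ i, |(Matrix.of A).mulVec x i| = |(Matrix.of A).mulVec z i|) →
      z = x ∨ z = -x := by
  classical
  have hgood : ∀ᵐ A : Fin m → Fin n → ℝ, ∀ (t : ℕ) (g : Fin t → Fin m) (f : Fin t → Fin n),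
      Function.Injective g → Function.Injective f →
      ((Matrix.of A).submatrix g f).det ≠ 0 := by
    rw [ae_all_iff]
    intro t
    rw [ae_all_iff]
    intro g
    rw [ae_all_iff]
    intro f
    by_cases hg : Function.Injective g
    · by_cases hf : Function.Injective f
      · filter_upwards [submatrix_det_ne_zero_ae n t m g f hg hf] with A h _ _
        exact h
      · filter_upwards with A _ hf'
        exact absurd hf' hf
    · filter_upwards with A hg'
      exact absurd hg' hg
  filter_upwards [hgood] with A hA x z hx hz hsupp habs
  by_cases h1 : z = x
  · exact Or.inl h1
  by_cases h2 : z = -x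
  · exact Or.inr h2
  exfalso
  set u : Fin n → ℝ := x - z with hu_def
  set v : Fin n → ℝ := x + z with hv_def
  have hu : u ≠ 0 := sub_ne_zero.mpr (fun h => h1 h.symm)
  have hv : v ≠ 0 := by
    intro h
    exact h2 (eq_neg_of_add_eq_zero_right h)
  have hprod : ∀ i, (Matrix.of A).mulVec u i * (Matrix.of A).mulVec v i = 0 := by
    intro i
    have h := habs i
    have hsq : ((Matrix.of A).mulVec x i) ^ 2 = ((Matrix.of A).mulVec z i) ^ 2 := by
      rw [← sq_abs ((Matrix.of A).mulVec x i), ← sq_abs ((Matrix.of A).mulVec z i), h]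
    have hu' : (Matrix.of A).mulVec u i
        = (Matrix.of A).mulVec x i - (Matrix.of A).mulVec z i := by
      rw [hu_def, Matrix.mulVec_sub]
      rfl
    have hv' : (Matrix.of A).mulVec v i
        = (Matrix.of A).mulVec x i + (Matrix.of A).mulVec z i := by
      rw [hv_def, Matrix.mulVec_add]
      rfl
    rw [hu', hv']
    nlinarith [hsq]
  set S1 : Finset (Fin m) := Finset.univ.filter (fun i => (Matrix.of A).mulVec u i = 0) with hS1
  set S2 : Finset (Fin m) := Finset.univ.filter (fun i => (Matrix.of A).mulVec v i = 0) with hS2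
  have hunion : ∀ i : Fin m, i ∈ S1 ∪ S2 := by
    intro i
    rcases mul_eq_zero.mp (hprod i) with h | h <;>
      simp [hS1, hS2, Finset.mem_union, Finset.mem_filter, h]
  have hcardsum : m ≤ S1.card + S2.card := by
    calc m = (Finset.univ : Finset (Fin m)).card := (Finset.card_fin m).symm
      _ = (S1 ∪ S2).card := by
          congr 1
          exact (Finset.eq_univ_iff_forall.mpr hunion).symm
      _ ≤ S1.card + S2.card := Finset.card_union_le _ _
  have husupp : Function.support u ⊆ Function.support x := by
    intro i hi
    by_contra hxi
    apply hi
    have hxi0 : x i = 0 := Function.notMem_support.mp hxi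
    have hzi0 : z i = 0 := Function.notMem_support.mp (hsupp ▸ hxi)
    show x i - z i = 0
    rw [hxi0, hzi0, sub_zero]
  have hvsupp : Function.support v ⊆ Function.support x := by
    intro i hi
    by_contra hxi
    apply hi
    have hxi0 : x i = 0 := Function.notMem_support.mp hxi
    have hzi0 : z i = 0 := Function.notMem_support.mp (hsupp ▸ hxi)
    show x i + z i = 0
    rw [hxi0, hzi0, add_zero]
  have hucard : (Function.support u).ncard ≤ k :=
    le_trans (Set.ncard_le_ncard husupp (Set.toFinite _)) hx
  have hvcard : (Function.support v).ncard ≤ k :=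
    le_trans (Set.ncard_le_ncard hvsupp (Set.toFinite _)) hx
  have hk' : k ≤ S1.card ∨ k ≤ S2.card := by
    by_contra h
    push_neg at h
    omega
  rcases hk' with h | h
  · exact no_sparse_kernel hA hu hucard h (fun i hi => (Finset.mem_filter.mp hi).2)
  · exact no_sparse_kernel hA hv hvcard h (fun i hi => (Finset.mem_filter.mp hi).2)
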